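/- Let T_1, ..., T_k be subgraphs of a finite graph G satisfying: (a) for each i, |V(T_i)| = 1 + |E(T_i)| and r_i ∈ V(T_i); (b) each T_i admits a flow assignment f with f_{e,u} + f_{e,v} = 1 for every e = (u,v) ∈ E(T_i) and Σ_{e ∈ E(T_i), e ∼ v} f_{e,v} ≤ 1 - 1/|V(G)| for every v ∈ V(T_i); and (c) every vertex of G lies in some T_i. Then {T_1, ..., T_k} is a feasible MMRTC solution: each T_i is a tree containing r_i, and the trees jointly cover V(G). -/

import Mathlib

open SimpleGraph


-- rigidity
lemma path_len {W : Type} {H : SimpleGraph W} (hac : H.IsAcyclic) {u v : W}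
    (p : H.Walk u v) (hp : p.IsPath) : p.length = H.dist u v := by
  obtain ⟨q, hq, hql⟩ := (p.reachable).exists_path_of_dist
  have := hac.path_unique ⟨p, hp⟩ ⟨q, hq⟩
  rw [Subtype.mk.injEq] at this
  rw [this, hql]

lemma adj_dist_ne {W : Type} [DecidableEq W] {H : SimpleGraph W} (hac : H.IsAcyclic) {u v ρ : W}
    (h : H.Adj u v) (hu : H.Reachable u ρ) : H.dist u ρ ≠ H.dist v ρ := by
  intro heq
  obtain ⟨p, hp, hpl⟩ := hu.exists_path_of_dist
  by_cases hv : v ∈ p.support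
  · have h1 : (p.takeUntil v hv).length + (p.dropUntil v hv).length = p.length := by
      rw [← Walk.length_append, p.take_spec hv]
    have h2 : (p.dropUntil v hv).length = H.dist v ρ := path_len hac _ (hp.dropUntil hv)
    have h3 : (p.takeUntil v hv).length ≠ 0 := by
      intro h0
      exact h.ne (Walk.eq_of_length_eq_zero h0)
    omega
  · have hq : (Walk.cons h.symm p).IsPath := hp.cons hv
    have := path_len hac _ hq
    rw [Walk.length_cons, hpl] at this
    omega

lemma lower_edge {W : Type} [DecidableEq W] {H : SimpleGraph W} (hac : H.IsAcyclic) {x a ρ : W}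
    (h : H.Adj x a) (hlt : H.dist a ρ < H.dist x ρ) (p : H.Walk x ρ) (hp : p.IsPath)
    (hpl : p.length = H.dist x ρ) : s(x, a) ∈ p.edges := by
  have ha : a ∈ p.support := by
    by_contra hna
    have hq : (Walk.cons h.symm p).IsPath := hp.cons hna
    have := path_len hac _ hq
    rw [Walk.length_cons, hpl] at this
    omega
  have hq1 : (p.takeUntil a ha).length = 1 := by
    have h1 := path_len hac _ (hp.takeUntil ha)
    have h2 := path_len hac (Path.singleton h).1 (Path.singleton h).2
    simp [Path.singleton] at h2
    omega
  have : s(x, a) ∈ (p.takeUntil a ha).edges := by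
    cases hq : (p.takeUntil a ha) with
    | nil => rw [hq] at hq1; simp at hq1
    | cons h' q' =>
      rw [hq] at hq1
      simp only [Walk.length_cons] at hq1
      have hq0 : q'.length = 0 := by omega
      have := Walk.eq_of_length_eq_zero hq0
      subst this
      simp
  exact p.edges_takeUntil_subset ha this

lemma lower_unique {W : Type} [DecidableEq W] {H : SimpleGraph W} (hac : H.IsAcyclic) {x a b ρ : W}
    (hxr : H.Reachable x ρ)
    (ha : H.Adj x a) (hb : H.Adj x b) (hlta : H.dist a ρ < H.dist x ρ)
    (hltb : H.dist b ρ < H.dist x ρ) : a = b := by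
  obtain ⟨p, hp, hpl⟩ := hxr.exists_path_of_dist
  have hea := lower_edge hac ha hlta p hp hpl
  have heb := lower_edge hac hb hltb p hp hpl
  cases p with
  | nil => simp at hea
  | cons h' p' =>
    rw [Walk.cons_isPath_iff] at hp
    simp only [Walk.edges_cons, List.mem_cons] at hea heb
    rcases hea with hea | hea
    · rcases heb with heb | heb
      · have : a = _ := Sym2.congr_right.mp hea
        rw [this]
        exact (Sym2.congr_right.mp heb).symm
      · exact absurd (Walk.fst_mem_support_of_mem_edges _ heb) hp.2
    · exact absurd (Walk.fst_mem_support_of_mem_edges _ hea) hp.2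

lemma forest_connected {W : Type} [Fintype W] [DecidableEq W] [Nonempty W] {H : SimpleGraph W}
    (hac : H.IsAcyclic) (hcard : Fintype.card W = Nat.card H.edgeSet + 1) : H.Connected := by
  classical
  set rep : W → W := fun v => (H.connectedComponentMk v).out with hrepdef
  have hmkrep : ∀ v : W, H.connectedComponentMk (rep v) = H.connectedComponentMk v := by
    intro v; simp [hrepdef, connectedComponentMk, Quot.out_eq]; rfl
  have hreach : ∀ v : W, H.Reachable v (rep v) := fun v =>
    ConnectedComponent.exact (hmkrep v).symm
  have hrep_adj : ∀ {u v : W}, H.Adj u v → rep u = rep v := by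
    intro u v h
    exact congrArg Quot.out (ConnectedComponent.sound h.reachable)
  -- spec for edges
  have hspec : ∀ e : H.edgeSet, ∃ x a : W, (e : Sym2 W) = s(x, a) ∧ H.Adj x a ∧
      H.dist a (rep x) < H.dist x (rep x) := by
    rintro ⟨e, he⟩
    induction e with
    | h u v =>
      have huv : H.Adj u v := he
      have hne := adj_dist_ne hac huv (hreach u)
      rcases lt_or_gt_of_ne hne with hlt | hlt
      · exact ⟨v, u, Sym2.eq_swap, huv.symm, by rwa [hrep_adj huv] at hlt⟩
      · exact ⟨u, v, rfl, huv, hlt⟩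
  choose xe ae hxe hadj hlt using hspec
  set Φ : H.edgeSet ⊕ H.ConnectedComponent → W := fun z =>
    match z with
    | Sum.inl e => xe e
    | Sum.inr c => c.out with hΦ
  have hx_ne_rep : ∀ e : H.edgeSet, rep (xe e) ≠ xe e := by
    intro e h
    have := hlt e
    rw [h] at this
    simp [SimpleGraph.dist_self] at this
  have hinj : Function.Injective Φ := by
    rintro (e₁ | c₁) (e₂ | c₂) h <;> simp only [hΦ] at h
    · have hx : xe e₁ = xe e₂ := h
      have ha : ae e₁ = ae e₂ := by
        refine lower_unique hac (hreach (xe e₁)) (hadj e₁) (hx ▸ hadj e₂) (hlt e₁) ?_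
        have := hlt e₂
        rw [← hx] at this
        exact this
      exact congrArg Sum.inl (Subtype.ext (by rw [hxe e₁, hxe e₂, hx, ha]))
    · exfalso
      apply hx_ne_rep e₁
      have : H.connectedComponentMk (xe e₁) = c₂ := by rw [h, connectedComponentMk]; exact Quot.out_eq c₂
      rw [hrepdef, h]
      exact congrArg Quot.out (Quot.out_eq c₂)
    · exfalso
      apply hx_ne_rep e₂
      have : H.connectedComponentMk (xe e₂) = c₁ := by rw [← h, connectedComponentMk]; exact Quot.out_eq c₁
      rw [hrepdef, ← h]
      exact congrArg Quot.out (Quot.out_eq c₁)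
    · rw [← Quot.out_eq c₁, ← Quot.out_eq c₂, h]
  have hcardle : Nat.card (H.edgeSet ⊕ H.ConnectedComponent) ≤ Nat.card W :=
    Nat.card_le_card_of_injective Φ hinj
  rw [Nat.card_sum, Nat.card_eq_fintype_card (α := W), hcard] at hcardle
  have : Nonempty H.ConnectedComponent := ⟨H.connectedComponentMk Classical.ofNonempty⟩
  have hpos : 0 < Nat.card H.ConnectedComponent := Nat.card_pos
  have hone : Nat.card H.ConnectedComponent = 1 := by omega
  have hsub : Subsingleton H.ConnectedComponent :=
    (Nat.card_eq_one_iff_unique.mp hone).1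
  exact Connected.mk fun u v => ConnectedComponent.exact (Subsingleton.elim _ _)

lemma flow_acyclic {V : Type} [Fintype V] [DecidableEq V] {G : SimpleGraph V} (T : G.Subgraph)
    (f : Sym2 V → V → ℝ)
    (hnonneg : ∀ e ∈ T.edgeSet, ∀ v ∈ e, 0 ≤ f e v)
    (hedge : ∀ u v : V, T.Adj u v → f s(u, v) u + f s(u, v) v = 1)
    (hvertex : ∀ v ∈ T.verts,
      ∑ e ∈ (Set.toFinite {e ∈ T.edgeSet | v ∈ e}).toFinset, f e v
        ≤ 1 - 1 / (Fintype.card V : ℝ)) :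
    T.coe.IsAcyclic := by
  classical
  intro v c hc
  set n := c.length with hn
  have hn3 : 3 ≤ n := hc.three_le_length
  set F : Finset (Sym2 T.verts) := c.edges.toFinset with hF
  set S : Finset T.verts := c.support.tail.toFinset with hS
  have hFcard : F.card = n := by
    rw [hF, List.toFinset_card_of_nodup hc.edges_nodup, Walk.length_edges]
  have hScard : S.card = n := by
    rw [hS, List.toFinset_card_of_nodup hc.support_nodup, List.length_tail, c.length_support]
    omega
  -- start is in the tail of the support
  have hmemS : ∀ (u : T.verts) (e : Sym2 T.verts), e ∈ c.edges → u ∈ e → u ∈ S := by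
    intro u e he hue
    have hsup : u ∈ c.support := by
      induction e with
      | h a b =>
        rcases Sym2.mem_iff.mp hue with rfl | rfl
        · exact Walk.fst_mem_support_of_mem_edges c he
        · exact Walk.snd_mem_support_of_mem_edges c he
    rw [hS, List.mem_toFinset]
    cases c with
    | nil => rw [hn] at hn3; simp at hn3
    | cons h' c' =>
      rw [Walk.support_cons, List.mem_cons] at hsup
      simp only [Walk.support_cons, List.tail_cons]
      rcases hsup with rfl | hsup
      · exact c'.end_mem_support
      · exact hsup
  -- edges of c are in the coe and subgraph edge set
  have hFedge : ∀ e ∈ F, e ∈ T.coe.edgeSet := by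
    intro e he
    exact c.edges_subset_edgeSet (by rwa [hF, List.mem_toFinset] at he)
  set g : Sym2 T.verts → Sym2 V := Sym2.map (fun x => (x : V)) with hg
  have hginj : Function.Injective g := Sym2.map.injective Subtype.val_injective
  have hgedge : ∀ e ∈ F, g e ∈ T.edgeSet := by
    intro e he
    have := hFedge e he
    rw [Subgraph.edgeSet_coe] at this
    exact this
  -- main identity
  have key1 : ∀ e ∈ F, ∑ u ∈ S.filter (fun u => u ∈ e), f (g e) (u : V) = 1 := by
    intro e he
    induction e with
    | h a b =>
      have hadj : T.coe.Adj a b := hFedge _ he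
      have hab : a ≠ b := hadj.ne
      have hfilter : S.filter (fun u => u ∈ s(a, b)) = {a, b} := by
        ext u
        simp only [Finset.mem_filter, Finset.mem_insert, Finset.mem_singleton, Sym2.mem_iff]
        constructor
        · rintro ⟨_, h⟩; exact h
        · rintro (rfl | rfl)
          · exact ⟨hmemS u _ (by rwa [hF, List.mem_toFinset] at he) (Sym2.mem_mk_left _ _), Or.inl rfl⟩
          · exact ⟨hmemS u _ (by rwa [hF, List.mem_toFinset] at he) (Sym2.mem_mk_right _ _), Or.inr rfl⟩
      rw [hfilter, Finset.sum_pair hab]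
      have : g s(a, b) = s((a : V), (b : V)) := by simp [hg]
      rw [this]
      exact hedge (a : V) (b : V) ((Subgraph.coe_adj _ _ _).mp hadj)
  have key2 : ∀ u ∈ S, ∑ e ∈ F.filter (fun e => u ∈ e), f (g e) (u : V)
      ≤ 1 - 1 / (Fintype.card V : ℝ) := by
    intro u _
    have himg : ∑ e ∈ F.filter (fun e => u ∈ e), f (g e) (u : V)
        = ∑ e' ∈ (F.filter (fun e => u ∈ e)).image g, f e' (u : V) := by
      rw [Finset.sum_image (fun x _ y _ h => hginj h)]
    rw [himg]
    have hsubset : (F.filter (fun e => u ∈ e)).image g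
        ⊆ (Set.toFinite {e ∈ T.edgeSet | (u : V) ∈ e}).toFinset := by
      intro e' he'
      rw [Finset.mem_image] at he'
      obtain ⟨e, he, rfl⟩ := he'
      rw [Finset.mem_filter] at he
      rw [Set.Finite.mem_toFinset]
      exact ⟨hgedge e he.1, Sym2.mem_map.mpr ⟨u, he.2, rfl⟩⟩
    calc ∑ e' ∈ (F.filter (fun e => u ∈ e)).image g, f e' (u : V)
        ≤ ∑ e' ∈ (Set.toFinite {e ∈ T.edgeSet | (u : V) ∈ e}).toFinset, f e' (u : V) := by
          apply Finset.sum_le_sum_of_subset_of_nonneg hsubset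
          intro e' he' _
          rw [Set.Finite.mem_toFinset] at he'
          exact hnonneg e' he'.1 _ he'.2
      _ ≤ 1 - 1 / (Fintype.card V : ℝ) := hvertex (u : V) u.2
  have hVpos : 0 < (Fintype.card V : ℝ) := by
    have : 0 < Fintype.card V := Fintype.card_pos_iff.mpr ⟨(v : V)⟩
    exact_mod_cast this
  have hmain : (n : ℝ) ≤ n * (1 - 1 / (Fintype.card V : ℝ)) := by
    calc (n : ℝ) = ∑ e ∈ F, (1 : ℝ) := by rw [Finset.sum_const, hFcard]; simp
      _ = ∑ e ∈ F, ∑ u ∈ S.filter (fun u => u ∈ e), f (g e) (u : V) := by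
          apply Finset.sum_congr rfl
          intro e he
          exact (key1 e he).symm
      _ = ∑ u ∈ S, ∑ e ∈ F.filter (fun e => u ∈ e), f (g e) (u : V) := by
          simp only [Finset.sum_filter]
          exact Finset.sum_comm
      _ ≤ ∑ u ∈ S, (1 - 1 / (Fintype.card V : ℝ)) := Finset.sum_le_sum key2
      _ = n * (1 - 1 / (Fintype.card V : ℝ)) := by
          rw [Finset.sum_const, hScard]; simp
  have hnpos : 0 < (n : ℝ) := by positivity
  have : (n : ℝ) * (1 / (Fintype.card V : ℝ)) > 0 := by positivity
  nlinarith



/-- If subgraphs `T 1, ..., T k` of a finite graph `G` satisfy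
(a) `|V(T i)| = 1 + |E(T i)|` and `r i ∈ V(T i)`,
(b) each `T i` admits a nonnegative flow assignment whose two flows sum to `1` on
every edge of `T i` and whose total incident flow at each vertex of `T i` is at most
`1 - 1/|V(G)|`, and
(c) every vertex of `G` lies in some `T i`,
then each `T i` is a tree containing its root and the trees jointly cover `V(G)`. -/
theorem stmt_11 {V : Type} [Fintype V] [DecidableEq V] (G : SimpleGraph V)
    (k : ℕ) (r : Fin k → V) (T : Fin k → G.Subgraph)
    (f : Fin k → Sym2 V → V → ℝ)
    (hcount : ∀ i, Set.ncard (T i).verts = 1 + Set.ncard (T i).edgeSet)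
    (hroot : ∀ i, r i ∈ (T i).verts)
    (hnonneg : ∀ i, ∀ e ∈ (T i).edgeSet, ∀ v ∈ e, 0 ≤ f i e v)
    (hedge : ∀ i, ∀ u v : V, (T i).Adj u v → f i s(u, v) u + f i s(u, v) v = 1)
    (hvertex : ∀ i, ∀ v ∈ (T i).verts,
      ∑ e ∈ (Set.toFinite {e ∈ (T i).edgeSet | v ∈ e}).toFinset, f i e v
        ≤ 1 - 1 / (Fintype.card V : ℝ))
    (hcover : ∀ v : V, ∃ i, v ∈ (T i).verts) :
    (∀ i, (T i).coe.IsTree) ∧ (∀ i, r i ∈ (T i).verts) ∧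
    (∀ v : V, ∃ i, v ∈ (T i).verts) := by
  classical
  refine ⟨fun i => ?_, hroot, hcover⟩
  have hac : (T i).coe.IsAcyclic :=
    flow_acyclic (T i) (f i) (hnonneg i) (hedge i) (hvertex i)
  have : Nonempty ((T i).verts : Set V) := ⟨⟨r i, hroot i⟩⟩
  have hcard : Fintype.card ((T i).verts : Set V) = Nat.card (T i).coe.edgeSet + 1 := by
    have h1 : Fintype.card ((T i).verts : Set V) = (T i).verts.ncard := by
      rw [← Nat.card_coe_set_eq, Nat.card_eq_fintype_card]
    have h2 : Nat.card (T i).coe.edgeSet = (T i).coe.edgeSet.ncard :=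
      Nat.card_coe_set_eq _
    have h3 : (T i).coe.edgeSet.ncard = (T i).edgeSet.ncard := by
      rw [← (T i).image_coe_edgeSet_coe]
      exact (Set.ncard_image_of_injective _ (Sym2.map.injective Subtype.val_injective)).symm
    rw [h1, h2, h3, hcount i]
    omega
  exact ⟨forest_connected hac hcard, hac⟩
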